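/- Let C ≥ 1 and K ≥ 1, let λ ∈ [0,1] and ε ≥ 0, and let X be an arbitrary set. Let f : X → Δ^{C−1} (the teacher) and f_r : X → Δ^{C−1} (the student) be functions, let ℓ : X → {1,…,C} assign a class label to each input, and write e_c ∈ Δ^{C−1} for the one-hot vector of class c. Suppose the teacher exhibits structured prediction bias with centroids μ_1, …, μ_K ∈ Δ^{C−1} and radii r_1, …, r_K > 0, i.e., for every x ∈ X there exists k ∈ {1,…,K} with ‖f(x) − μ_k‖₂ ≤ r_k. Suppose further that the student satisfies the ε-convergence bound ‖f_r(x) − (λ·e_{ℓ(x)} + (1−λ)·f(x))‖₁ ≤ ε for every x ∈ X. Then for every x ∈ X there exists k ∈ {1,…,K} such that ‖f_r(x) − (λ·e_{ℓ(x)} + (1−λ)·μ_k)‖₂ ≤ (1−λ)·r_k + ε; that is, every student prediction lies in an ℓ²-ball around a propagated centroid λ·e_{ℓ(x)} + (1−λ)·μ_k of radius (1−λ)·r_k + ε. -/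

import Mathlib

/-- The probability simplex: nonnegative entries summing to 1. -/
def simplex {C : ℕ} (p : Fin C → ℝ) : Prop :=
  (∀ i, 0 ≤ p i) ∧ ∑ i, p i = 1

/-- ℓ¹ norm on ℝ^C. -/
noncomputable def l1norm {C : ℕ} (v : Fin C → ℝ) : ℝ := ∑ i, |v i|

/-- ℓ² norm on ℝ^C. -/
noncomputable def l2norm {C : ℕ} (v : Fin C → ℝ) : ℝ := Real.sqrt (∑ i, (v i) ^ 2)

/-- One-hot vector of class c. -/
def onehot {C : ℕ} (c : Fin C) : Fin C → ℝ := fun i => if i = c then 1 else 0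


lemma l2norm_eq {C : ℕ} (v : Fin C → ℝ) :
    l2norm v = ‖(WithLp.equiv 2 (Fin C → ℝ)).symm v‖ := by
  rw [EuclideanSpace.norm_eq, l2norm]
  simp [sq_abs]

lemma l2norm_add_le {C : ℕ} (u v : Fin C → ℝ) :
    l2norm (fun i => u i + v i) ≤ l2norm u + l2norm v := by
  have e : (WithLp.equiv 2 (Fin C → ℝ)).symm (fun i => u i + v i)
      = (WithLp.equiv 2 (Fin C → ℝ)).symm u + (WithLp.equiv 2 (Fin C → ℝ)).symm v := by
    ext i; simp
  rw [l2norm_eq, l2norm_eq, l2norm_eq, e]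
  exact norm_add_le ((WithLp.equiv 2 (Fin C → ℝ)).symm u) ((WithLp.equiv 2 (Fin C → ℝ)).symm v)

lemma l2norm_smul {C : ℕ} (c : ℝ) (v : Fin C → ℝ) :
    l2norm (fun i => c * v i) = |c| * l2norm v := by
  have e : (WithLp.equiv 2 (Fin C → ℝ)).symm (fun i => c * v i)
      = c • (WithLp.equiv 2 (Fin C → ℝ)).symm v := by
    ext i; simp
  rw [l2norm_eq, l2norm_eq, e, norm_smul, Real.norm_eq_abs]

lemma l2norm_le_l1norm {C : ℕ} (v : Fin C → ℝ) : l2norm v ≤ l1norm v := by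
  rw [l2norm, l1norm]
  have h : ∑ i, (v i) ^ 2 ≤ (∑ i, |v i|) ^ 2 := by
    calc ∑ i, (v i) ^ 2 = ∑ i, |v i| ^ 2 := by simp [sq_abs]
    _ ≤ (∑ i, |v i|) ^ 2 := Finset.sum_sq_le_sq_sum_of_nonneg (fun i _ => abs_nonneg _)
  calc Real.sqrt (∑ i, (v i) ^ 2) ≤ Real.sqrt ((∑ i, |v i|) ^ 2) := Real.sqrt_le_sqrt h
  _ = ∑ i, |v i| := Real.sqrt_sq (Finset.sum_nonneg fun i _ => abs_nonneg _)

/-- Bias propagation through knowledge distillation: if the teacher f exhibits structured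
prediction bias with centroids μ_k and radii r_k, and the student f_r is ε-close in ℓ¹ to the
convex combination λ·e_{ℓ(x)} + (1−λ)·f(x), then every student prediction lies in an ℓ²-ball
of radius (1−λ)·r_k + ε around a propagated centroid λ·e_{ℓ(x)} + (1−λ)·μ_k. -/
theorem bias_propagation_through_KD (C K : ℕ) (hC : 1 ≤ C) (hK : 1 ≤ K)
    (lam ε : ℝ) (hlam0 : 0 ≤ lam) (hlam1 : lam ≤ 1) (hε : 0 ≤ ε)
    (X : Type*) (f fr : X → Fin C → ℝ)
    (hf : ∀ x, simplex (f x)) (hfr : ∀ x, simplex (fr x))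
    (lab : X → Fin C)
    (μ : Fin K → Fin C → ℝ) (r : Fin K → ℝ)
    (hμ : ∀ k, simplex (μ k)) (hr : ∀ k, 0 < r k)
    (hbias : ∀ x, ∃ k, l2norm (fun i => f x i - μ k i) ≤ r k)
    (hconv : ∀ x,
      l1norm (fun i => fr x i - (lam * onehot (lab x) i + (1 - lam) * f x i)) ≤ ε) :
    ∀ x, ∃ k, l2norm (fun i => fr x i - (lam * onehot (lab x) i + (1 - lam) * μ k i))
      ≤ (1 - lam) * r k + ε := by
  intro x
  obtain ⟨k, hk⟩ := hbias x
  refine ⟨k, ?_⟩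
  have key : (fun i => fr x i - (lam * onehot (lab x) i + (1 - lam) * μ k i))
      = (fun i => (fr x i - (lam * onehot (lab x) i + (1 - lam) * f x i))
          + (1 - lam) * (f x i - μ k i)) := by
    funext i; ring
  rw [key]
  calc l2norm (fun i => (fr x i - (lam * onehot (lab x) i + (1 - lam) * f x i))
          + (1 - lam) * (f x i - μ k i))
      ≤ l2norm (fun i => fr x i - (lam * onehot (lab x) i + (1 - lam) * f x i))
        + l2norm (fun i => (1 - lam) * (f x i - μ k i)) := l2norm_add_le _ _
    _ ≤ ε + (1 - lam) * r k := by
        gcongr ?_ + ?_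
        · exact (l2norm_le_l1norm _).trans (hconv x)
        · rw [l2norm_smul, abs_of_nonneg (by linarith)]
          have h1 : (0:ℝ) ≤ 1 - lam := by linarith
          exact mul_le_mul_of_nonneg_left hk h1
    _ = (1 - lam) * r k + ε := by ring
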